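/- arXiv:1703.07606 — 2 statements merged into one kernel-verified Lean document; each statement's English description precedes it below -/
import Mathlib

section
/- A finite group G is p-nilpotent (i.e., G has a normal subgroup N with G = N ⋊ S for a Sylow p-subgroup S, equivalently G has a normal p-complement) if and only if for every Sylow p-subgroup S of G, every pair of subgroups P, Q ≤ S and every g ∈ G with gPg⁻¹ = Q, the conjugation map by g from P to Q agrees with conjugation by some element s ∈ S (i.e., the fusion system of G on S equals the fusion system of S on itself). -/
open Subgroup

section Helpers

variable {p : ℕ} [Fact p.Prime]

/-- Conjugation of a subgroup. -/
private abbrev cj {G : Type*} [Group G] (g : G) (P : Subgroup G) : Subgroup G :=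
  Subgroup.map (MulAut.conj g).toMonoidHom P

variable {G : Type*} [Group G]

private lemma mem_cj {g x : G} {P : Subgroup G} : x ∈ cj g P ↔ g⁻¹ * x * g ∈ P := by
  rw [Subgroup.mem_map_equiv]
  simp [MulAut.conj]

private lemma cj_cj (a b : G) (P : Subgroup G) : cj a (cj b P) = cj (a * b) P := by
  ext x
  simp only [mem_cj, mul_inv_rev]
  constructor <;> intro h <;>
    · have key : b⁻¹ * a⁻¹ * x * (a * b) = b⁻¹ * (a⁻¹ * x * a) * b := by group
      first
      | exact h
      | rwa [key]
      | rwa [key] at h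
      | rwa [← key]
      | rwa [← key] at h

private lemma cj_mono {a : G} {P Q : Subgroup G} (h : P ≤ Q) : cj a P ≤ cj a Q :=
  Subgroup.map_mono h

private lemma mem_cj_of_mem {a x : G} {P : Subgroup G} (h : x ∈ P) : a * x * a⁻¹ ∈ cj a P :=
  ⟨x, h, by simp [MulAut.conj]⟩

private lemma cj_self_of_mem {a : G} {P : Subgroup G} (h : a ∈ P) : cj a P = P := by
  ext x
  rw [mem_cj]
  constructor
  · intro hx
    have h2 := mul_mem (mul_mem h hx) (inv_mem h)
    rwa [show a * (a⁻¹ * x * a) * a⁻¹ = x by group] at h2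
  · intro hx
    exact mul_mem (mul_mem (inv_mem h) hx) h

private lemma card_cj (g : G) (P : Subgroup G) : Nat.card (cj g P) = Nat.card P :=
  (Nat.card_congr (P.equivMapOfInjective _ (MulAut.conj g).injective).toEquiv).symm

private lemma cj_normalizer (g : G) (P : Subgroup G) :
    cj g (Subgroup.normalizer (P : Set G)) = (Subgroup.normalizer ((cj g P) : Set G)) :=
  Subgroup.map_equiv_normalizer_eq P (MulAut.conj g)

private lemma mem_normalizer_of_cj_eq {s : G} {Q : Subgroup G} (h : cj s Q = Q) :
    s ∈ (Subgroup.normalizer (Q : Set G)) := by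
  rw [mem_normalizer_iff]
  intro x
  constructor
  · intro hx
    rw [← h]
    exact mem_cj_of_mem hx
  · intro hx
    rw [← h] at hx
    simpa [mul_assoc] using mem_cj.mp hx

private lemma cj_eq_of_mem_normalizer {s : G} {Q : Subgroup G} (h : s ∈ (Subgroup.normalizer (Q : Set G))) :
    cj s Q = Q := by
  ext x
  rw [mem_cj]
  rw [mem_normalizer_iff''] at h
  exact (h x).symm

/-- The Frobenius criterion: normalizers modulo centralizers of `p`-subgroups are `p`-groups,
elementwise form. -/
def Crit (p : ℕ) (G : Type*) [Group G] : Prop :=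
  ∀ Q : Subgroup G, IsPGroup p Q → ∀ g ∈ (Subgroup.normalizer (Q : Set G)),
    ∃ k : ℕ, g ^ p ^ k ∈ Subgroup.centralizer (Q : Set G)

private lemma centralizer_subgroupOf_normal (Q : Subgroup G) :
    ((Subgroup.centralizer (Q : Set G)).subgroupOf (Subgroup.normalizer (Q : Set G))).Normal := by
  constructor
  intro c hc n
  rw [Subgroup.mem_subgroupOf] at hc ⊢
  rw [Subgroup.mem_centralizer_iff] at hc ⊢
  intro x hx
  have h1 : (n : G)⁻¹ * x * n ∈ Q := (mem_normalizer_iff''.mp n.2 x).mp hx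
  have h2 := hc _ h1
  have hco : ((n * c * n⁻¹ : (Subgroup.normalizer (Q : Set G))) : G) = (n : G) * c * (n : G)⁻¹ := by
    simp [mul_assoc]
  rw [hco]
  calc x * ((n : G) * c * (n : G)⁻¹)
      = (n : G) * (((n : G)⁻¹ * x * n) * c) * (n : G)⁻¹ := by group
    _ = (n : G) * (c * ((n : G)⁻¹ * x * n)) * (n : G)⁻¹ := by rw [h2]
    _ = (n : G) * c * (n : G)⁻¹ * x := by group

end Helpers
section Chunk2

variable {p : ℕ} [Fact p.Prime] {G : Type*} [Group G]

/-- Under the Frobenius criterion, `N_G(Q) = T · C_G(Q)` for `T` a Sylow `p`-subgroup of the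
normalizer. -/
private lemma lemA [Finite G] (hc : Crit p G) {Q : Subgroup G} (hQ : IsPGroup p Q)
    (T : Sylow p (Subgroup.normalizer (Q : Set G))) {g : G} (hg : g ∈ (Subgroup.normalizer (Q : Set G))) :
    ∃ t ∈ Subgroup.map (Subgroup.normalizer (Q : Set G)).subtype T.1, ∃ c ∈ Subgroup.centralizer (Q : Set G),
      g = t * c := by
  set C : Subgroup ↥(Subgroup.normalizer (Q : Set G)) := (Subgroup.centralizer (Q : Set G)).subgroupOf (Subgroup.normalizer (Q : Set G))
    with hC
  haveI hCn : C.Normal := centralizer_subgroupOf_normal Q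
  have hquot : IsPGroup p (↥(Subgroup.normalizer (Q : Set G)) ⧸ C) := by
    intro q
    obtain ⟨n, rfl⟩ := QuotientGroup.mk_surjective q
    obtain ⟨k, hk⟩ := hc Q hQ n n.2
    refine ⟨k, ?_⟩
    have hmem : n ^ p ^ k ∈ C := by
      rw [Subgroup.mem_subgroupOf]
      simpa using hk
    have h1 : ((QuotientGroup.mk' C) n) ^ p ^ k = (QuotientGroup.mk' C) (n ^ p ^ k) :=
      (map_pow _ _ _).symm
    show ((QuotientGroup.mk' C) n) ^ p ^ k = 1
    rw [h1, ← MonoidHom.mem_ker, QuotientGroup.ker_mk']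
    exact hmem
  obtain ⟨j, hj⟩ := hquot.exists_card_eq
  have hdvd1 : (T.1 ⊔ C).index ∣ p ^ j := by
    have h := Subgroup.index_dvd_of_le (le_sup_right : C ≤ T.1 ⊔ C)
    have hCi : C.index = p ^ j := by rw [Subgroup.index_eq_card]; exact hj
    rwa [hCi] at h
  have hndvd : ¬ p ∣ (T.1 ⊔ C).index :=
    fun h => T.not_dvd_index (h.trans (Subgroup.index_dvd_of_le le_sup_left))
  have hone : (T.1 ⊔ C).index = 1 :=
    Nat.Coprime.eq_one_of_dvd (((Fact.out (p := p.Prime)).coprime_iff_not_dvd.mpr hndvd).pow_left j).symm hdvd1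
  have htop : T.1 ⊔ C = ⊤ := Subgroup.index_eq_one.mp hone
  have hmem : (⟨g, hg⟩ : ↥(Subgroup.normalizer (Q : Set G))) ∈ ((T.1 ⊔ C : Subgroup ↥(Subgroup.normalizer (Q : Set G))) : Set ↥(Subgroup.normalizer (Q : Set G))) := by
    rw [htop]; simp
  rw [Subgroup.mul_normal T.1 C] at hmem
  obtain ⟨t, ht, c, hcm, htc⟩ := hmem
  refine ⟨(t : G), Subgroup.mem_map_of_mem _ ht, (c : G), ?_, ?_⟩
  · exact (Subgroup.mem_subgroupOf).mp hcm
  · have := congrArg (fun x : ↥(Subgroup.normalizer (Q : Set G)) => (x : G)) htc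
    simpa using this.symm

private lemma norm_growth [Finite G] {S P : Subgroup G} (hS : IsPGroup p S)
    (hPS : P ≤ S) (hne : P ≠ S) : ∃ R : Subgroup G, P < R ∧ R ≤ S ∧ R ≤ (Subgroup.normalizer (P : Set G)) := by
  haveI : Group.IsNilpotent ↥S := hS.isNilpotent
  have hnc := normalizerCondition_of_isNilpotent (G := ↥S)
  set P' := P.subgroupOf S with hP'
  have hP'top : P' ≠ ⊤ := by
    intro h
    exact hne (le_antisymm hPS (by rwa [Subgroup.subgroupOf_eq_top] at h))
  have hlt := hnc P' (lt_top_iff_ne_top.mpr hP'top)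
  refine ⟨(Subgroup.normalizer (P' : Set _)).map S.subtype, ?_, Subgroup.map_subtype_le _, ?_⟩
  · have hPeq : P = P'.map S.subtype := by
      rw [Subgroup.subgroupOf_map_subtype, inf_of_le_left hPS]
    rw [hPeq]
    exact lt_of_le_of_ne (Subgroup.map_mono hlt.le)
      (fun h => hlt.ne (Subgroup.map_injective S.subtype_injective h))
  · rintro x ⟨y, hy, rfl⟩
    rw [Subgroup.mem_normalizer_iff]
    intro h
    constructor
    · intro hh
      have h1 : (⟨h, hPS hh⟩ : S) ∈ P' := Subgroup.mem_subgroupOf.mpr hh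
      have h2 := (Subgroup.mem_normalizer_iff.mp hy _).mp h1
      have h3 := Subgroup.mem_subgroupOf.mp h2
      simpa using h3
    · intro hh
      have hhS : (y : G) * h * (y : G)⁻¹ ∈ S := hPS hh
      have hhS' : h ∈ S := by
        have h4 := mul_mem (mul_mem (inv_mem y.2) hhS) y.2
        rwa [show (y : G)⁻¹ * ((y : G) * h * (y : G)⁻¹) * y = h by group] at h4
      have h5 : y * (⟨h, hhS'⟩ : S) * y⁻¹ ∈ P' := by
        rw [Subgroup.mem_subgroupOf]
        simpa using hh
      have h6 := (Subgroup.mem_normalizer_iff.mp hy _).mpr h5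
      exact Subgroup.mem_subgroupOf.mp h6

private lemma commutator_ne_top {G' : Type*} [Group G'] [Finite G'] [Nontrivial G']
    [Group.IsNilpotent G'] : commutator G' ≠ ⊤ := by
  intro h
  have hall : ∀ n, Subgroup.lowerCentralSeries (⊤ : Subgroup G') n = ⊤ := by
    intro n
    induction n with
    | zero => exact Subgroup.lowerCentralSeries_zero _
    | succ n ih => rw [Subgroup.lowerCentralSeries_succ, ih]; exact h
  obtain ⟨n, hn⟩ := Subgroup.nilpotent_iff_lowerCentralSeries.mp ‹_›
  rw [hall n] at hn
  exact top_ne_bot hn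

private lemma crit_subgroup (hc : Crit p G) (K : Subgroup G) : Crit p ↥K := by
  intro Q' hQ' g hg
  set Q := Q'.map K.subtype with hQdef
  have hQ : IsPGroup p Q := hQ'.map _
  have hgN : (g : G) ∈ (Subgroup.normalizer (Q : Set G)) := by
    rw [Subgroup.mem_normalizer_iff]
    intro h
    constructor
    · rintro ⟨y, hy, rfl⟩
      exact ⟨g * y * g⁻¹, (Subgroup.mem_normalizer_iff.mp hg y).mp hy, by simp [mul_assoc]⟩
    · rintro ⟨y, hy, hy2⟩
      have hy2' : (y : G) = (g : G) * h * (g : G)⁻¹ := hy2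
      have hhK : h ∈ K := by
        have heq : h = ((g⁻¹ * y * g : K) : G) := by
          push_cast
          rw [hy2']
          group
        rw [heq]; exact (g⁻¹ * y * g).2
      refine ⟨⟨h, hhK⟩, ?_, rfl⟩
      have h7 : g * (⟨h, hhK⟩ : K) * g⁻¹ ∈ Q' := by
        have h8 : (g * (⟨h, hhK⟩ : K) * g⁻¹ : K) = y := by
          apply Subtype.ext
          push_cast
          rw [hy2']
        rw [h8]; exact hy
      exact (Subgroup.mem_normalizer_iff.mp hg _).mpr h7
  obtain ⟨k, hk⟩ := hc Q hQ (g : G) hgN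
  refine ⟨k, ?_⟩
  rw [Subgroup.mem_centralizer_iff]
  intro h hh
  have h9 := Subgroup.mem_centralizer_iff.mp hk (h : G) (Subgroup.mem_map_of_mem _ hh)
  apply Subtype.ext
  push_cast
  exact h9

end Chunk2
section Chunk3

variable {p : ℕ} [Fact p.Prime] {G : Type*} [Group G]

private lemma subgroup_eq_of_le_of_card_le [Finite G] {H K : Subgroup G}
    (h : H ≤ K) (hcard : Nat.card K ≤ Nat.card H) : H = K := by
  apply SetLike.coe_injective
  apply Set.eq_of_subset_of_ncard_le h ?_ (Set.toFinite _)
  rw [← Nat.card_coe_set_eq, ← Nat.card_coe_set_eq]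
  exact hcard

private lemma cj_one (P : Subgroup G) : cj (1 : G) P = P := by
  ext x; simp [mem_cj]

private lemma isPGroup_of_equiv {p : ℕ} {H1 H2 : Type*} [Group H1] [Group H2]
    (e : H1 ≃* H2) (h : IsPGroup p H2) : IsPGroup p H1 := fun x => by
  obtain ⟨k, hk⟩ := h (e x)
  exact ⟨k, e.injective (by rw [map_pow, hk, map_one])⟩

private lemma map_subtype_cj {N : Subgroup G} (n : ↥N) (K : Subgroup ↥N) :
    Subgroup.map N.subtype (Subgroup.map (MulAut.conj n).toMonoidHom K)
      = cj (n : G) (Subgroup.map N.subtype K) := by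
  show _ = Subgroup.map (MulAut.conj (n : G)).toMonoidHom (Subgroup.map N.subtype K)
  rw [Subgroup.map_map, Subgroup.map_map]
  rfl

private lemma centralizer_cj {g z : G} {P : Subgroup G}
    (hz : z ∈ Subgroup.centralizer ((cj g P : Subgroup G) : Set G)) :
    g⁻¹ * z * g ∈ Subgroup.centralizer (P : Set G) := by
  rw [Subgroup.mem_centralizer_iff] at hz ⊢
  intro x hx
  have h1 := hz (g * x * g⁻¹) (mem_cj_of_mem hx)
  calc x * (g⁻¹ * z * g) = g⁻¹ * ((g * x * g⁻¹) * z) * g := by group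
    _ = g⁻¹ * (z * (g * x * g⁻¹)) * g := by rw [h1]
    _ = g⁻¹ * z * g * x := by group

/-- Under the Frobenius criterion, fusion is controlled by the Sylow subgroup. -/
private lemma fusion [Finite G] (hc : Crit p G) (S : Sylow p G) :
    ∀ P : Subgroup G, P ≤ S.1 → ∀ g : G, cj g P ≤ S.1 →
      ∃ s ∈ S.1, s⁻¹ * g ∈ Subgroup.centralizer (P : Set G) := by
  suffices H : ∀ n : ℕ, ∀ P : Subgroup G, P ≤ S.1 → ∀ g : G, cj g P ≤ S.1 →
      Nat.card S.1 - Nat.card P ≤ n →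
      ∃ s ∈ S.1, s⁻¹ * g ∈ Subgroup.centralizer (P : Set G) by
    exact fun P hP g hg => H _ P hP g hg le_rfl
  intro n
  induction n using Nat.strong_induction_on with
  | _ n ih =>
  intro P hPS g hQS hn
  by_cases hPeq : P = S.1
  · -- base case : P is the Sylow subgroup itself
    have hle : cj g P ≤ P := le_trans hQS (le_of_eq hPeq.symm)
    have heq : cj g P = P := subgroup_eq_of_le_of_card_le hle (by rw [card_cj])
    have hgN : g ∈ (Subgroup.normalizer (P : Set G)) := mem_normalizer_of_cj_eq heq
    have hSleN : S.1 ≤ (Subgroup.normalizer (P : Set G)) := by rw [← hPeq]; exact Subgroup.le_normalizer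
    obtain ⟨t, htm, c, hcm, htc⟩ :=
      lemA hc (hPeq ▸ S.2 : IsPGroup p P) (S.subtype hSleN) hgN
    have htS : t ∈ S.1 := by
      have h1 : Subgroup.map (Subgroup.normalizer (P : Set G)).subtype (S.subtype hSleN).1 = S.1 := by
        rw [Sylow.coe_subtype, Subgroup.subgroupOf_map_subtype, inf_of_le_left hSleN]
      rw [← h1]
      exact htm
    refine ⟨t, htS, ?_⟩
    rw [htc]
    simpa using hcm
  · -- inductive step
    obtain ⟨R, hPR, hRS, hRN⟩ := norm_growth (p := p) S.2 hPS hPeq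
    have hcardQ : Nat.card (cj g P) = Nat.card P := card_cj g P
    have hcardPR : Nat.card P < Nat.card R := by
      refine lt_of_le_of_ne (Subgroup.card_le_of_le hPR.le) (fun h => hPR.ne ?_)
      exact subgroup_eq_of_le_of_card_le hPR.le h.ge
    have hcardRS : Nat.card R ≤ Nat.card S.1 := Subgroup.card_le_of_le hRS
    have hcardPS : Nat.card P < Nat.card S.1 := lt_of_lt_of_le hcardPR hcardRS
    have hQneS : cj g P ≠ S.1 := fun h => by
      rw [h] at hcardQ
      omega
    obtain ⟨R₂, hQR₂, hR₂S, hR₂N⟩ := norm_growth (p := p) S.2 hQS hQneS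
    have hcardQR₂ : Nat.card (cj g P) < Nat.card R₂ := by
      refine lt_of_le_of_ne (Subgroup.card_le_of_le hQR₂.le) (fun h => hQR₂.ne ?_)
      exact subgroup_eq_of_le_of_card_le hQR₂.le h.ge
    -- X := cj g R normalizes Q := cj g P
    have hXN : cj g R ≤ (Subgroup.normalizer ((cj g P) : Set G)) := by
      rw [← cj_normalizer]
      exact cj_mono hRN
    -- Sylow T of N(Q) containing R₂
    have hR₂p : IsPGroup p R₂ := S.2.to_le hR₂S
    obtain ⟨T, hTle⟩ :=
      (isPGroup_of_equiv (Subgroup.subgroupOfEquivOfLe hR₂N) hR₂p).exists_le_sylow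
    -- Sylow R₃ of N(Q) containing X, conjugate it into T
    have hXp : IsPGroup p ((cj g R).subgroupOf (Subgroup.normalizer ((cj g P) : Set G))) :=
      isPGroup_of_equiv (Subgroup.subgroupOfEquivOfLe hXN) ((S.2.to_le hRS).map _)
    obtain ⟨R₃, hR₃⟩ := hXp.exists_le_sylow
    obtain ⟨nq, hnq⟩ := MulAction.exists_smul_eq ↥(Subgroup.normalizer ((cj g P) : Set G)) R₃ T
    have hXT : Subgroup.map (MulAut.conj nq).toMonoidHom
        ((cj g R).subgroupOf (Subgroup.normalizer ((cj g P) : Set G))) ≤ T.1 := by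
      have hcoe : ((nq • R₃ : Sylow p ↥(Subgroup.normalizer ((cj g P) : Set G))) : Subgroup ↥(Subgroup.normalizer ((cj g P) : Set G)))
          = Subgroup.map (MulAut.conj nq).toMonoidHom R₃.1 := rfl
      rw [← hnq, hcoe]
      exact Subgroup.map_mono hR₃
    obtain ⟨t, htm, c, hcm, htc⟩ := lemA hc (S.2.to_le hQS) T nq.2
    set TG := Subgroup.map (Subgroup.normalizer ((cj g P) : Set G)).subtype T.1 with hTGdef
    have hsubXmap : Subgroup.map (Subgroup.normalizer ((cj g P) : Set G)).subtype
        ((cj g R).subgroupOf (Subgroup.normalizer ((cj g P) : Set G))) = cj g R := by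
      rw [Subgroup.subgroupOf_map_subtype, inf_of_le_left hXN]
    have hXTG : cj (nq : G) (cj g R) ≤ TG := by
      calc cj (nq : G) (cj g R)
          = Subgroup.map (Subgroup.normalizer ((cj g P) : Set G)).subtype (Subgroup.map (MulAut.conj nq).toMonoidHom
              ((cj g R).subgroupOf (Subgroup.normalizer ((cj g P) : Set G)))) := by
            rw [map_subtype_cj, hsubXmap]
        _ ≤ TG := Subgroup.map_mono hXT
    have hcX : cj c (cj g R) ≤ TG := by
      have h2 : cj (nq : G) (cj g R) = cj t (cj c (cj g R)) := by
        rw [cj_cj, cj_cj, cj_cj, htc, mul_assoc]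
      have h4 := cj_mono (a := t⁻¹) (h2 ▸ hXTG)
      rw [cj_cj, cj_cj, inv_mul_cancel, one_mul] at h4
      exact h4.trans (le_of_eq (cj_self_of_mem (inv_mem htm)))
    have hTGp : IsPGroup p TG := T.2.map _
    obtain ⟨S₂, hS₂⟩ := hTGp.exists_le_sylow
    obtain ⟨h₀, hh₀⟩ := MulAction.exists_smul_eq G S₂ S
    have hS₂S : cj h₀ S₂.1 = S.1 := by
      have hcoe : ((h₀ • S₂ : Sylow p G) : Subgroup G)
          = Subgroup.map (MulAut.conj h₀).toMonoidHom S₂.1 := rfl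
      rw [← hh₀, hcoe]
    have hTGS : cj h₀ TG ≤ S.1 := by
      rw [← hS₂S]
      exact cj_mono hS₂
    -- first application of the induction hypothesis
    have hg'R : cj (h₀ * (c * g)) R ≤ S.1 := by
      rw [← cj_cj, ← cj_cj]
      exact (cj_mono hcX).trans hTGS
    have hmeas1 : Nat.card S.1 - Nat.card R < n :=
      lt_of_lt_of_le (Nat.sub_lt_sub_left hcardPS hcardPR) hn
    obtain ⟨s₁, hs₁S, hs₁⟩ := ih _ hmeas1 R hRS (h₀ * (c * g)) hg'R le_rfl
    -- second application, to R₂ and h₀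
    have hR₂TG : R₂ ≤ TG := by
      have h5 := Subgroup.map_mono (f := (Subgroup.normalizer ((cj g P) : Set G)).subtype) hTle
      rwa [Subgroup.subgroupOf_map_subtype, inf_of_le_left hR₂N] at h5
    have hh₀R₂ : cj h₀ R₂ ≤ S.1 := (cj_mono hR₂TG).trans hTGS
    have hmeas2 : Nat.card S.1 - Nat.card R₂ < n := by
      have : Nat.card P < Nat.card R₂ := hcardQ ▸ hcardQR₂
      exact lt_of_lt_of_le (Nat.sub_lt_sub_left hcardPS this) hn
    obtain ⟨s₂, hs₂S, hs₂⟩ := ih _ hmeas2 R₂ hR₂S h₀ hh₀R₂ le_rfl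
    -- assemble
    refine ⟨s₂⁻¹ * s₁, mul_mem (inv_mem hs₂S) hs₁S, ?_⟩
    have he₁ : s₁⁻¹ * (h₀ * (c * g)) ∈ Subgroup.centralizer (P : Set G) :=
      Subgroup.centralizer_le hPR.le hs₁
    have hdC : s₂⁻¹ * h₀ ∈ Subgroup.centralizer ((cj g P : Subgroup G) : Set G) :=
      Subgroup.centralizer_le hQR₂.le hs₂
    have hf' : c⁻¹ * (s₂⁻¹ * h₀)⁻¹ ∈ Subgroup.centralizer ((cj g P : Subgroup G) : Set G) :=
      mul_mem (inv_mem hcm) (inv_mem hdC)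
    have hw : g⁻¹ * (c⁻¹ * (s₂⁻¹ * h₀)⁻¹) * g ∈ Subgroup.centralizer (P : Set G) :=
      centralizer_cj hf'
    have hfin := mul_mem he₁ hw
    rwa [show (s₁⁻¹ * (h₀ * (c * g))) * (g⁻¹ * (c⁻¹ * (s₂⁻¹ * h₀)⁻¹) * g)
      = (s₂⁻¹ * s₁)⁻¹ * g from by group] at hfin

end Chunk3
section Chunk4

open MulAction in
/-- Transfer evaluation when all relevant conjugates are equal modulo `ker ϕ`. -/
private lemma transfer_eq_pow_of_fusion {G : Type*} [Group G] {H : Subgroup G} {A : Type*}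
    [CommGroup A] (ϕ : ↥H →* A) [H.FiniteIndex] (g : G) (hg : g ∈ H)
    (key : ∀ (k : ℕ) (g₀ : G) (h : g₀⁻¹ * g ^ k * g₀ ∈ H),
      ϕ ⟨g₀⁻¹ * g ^ k * g₀, h⟩ = ϕ ⟨g ^ k, H.pow_mem hg k⟩) :
    MonoidHom.transfer ϕ g = ϕ ⟨g, hg⟩ ^ H.index := by
  classical
  letI := H.fintypeQuotientOfFiniteIndex
  rw [MonoidHom.transfer_eq_prod_quotient_orbitRel_zpowers_quot]
  have hsum : H.index = ∑ q : Quotient (orbitRel (Subgroup.zpowers g) (G ⧸ H)),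
      Function.minimalPeriod (g • ·) q.out := by
    rw [Subgroup.index_eq_card, Nat.card_eq_fintype_card,
      Fintype.card_congr (selfEquivSigmaOrbits (Subgroup.zpowers g) (G ⧸ H)),
      Fintype.card_sigma]
    exact Finset.sum_congr rfl fun q _ => (minimalPeriod_eq_card (a := g) (b := q.out)).symm
  calc (∏ q : Quotient (orbitRel (Subgroup.zpowers g) (G ⧸ H)),
        ϕ ⟨q.out.out⁻¹ * g ^ Function.minimalPeriod (g • ·) q.out * q.out.out,
          QuotientGroup.out_conj_pow_minimalPeriod_mem H g q.out⟩)
      = ∏ q : Quotient (orbitRel (Subgroup.zpowers g) (G ⧸ H)),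
          ϕ ⟨g, hg⟩ ^ Function.minimalPeriod (g • ·) q.out := by
        refine Finset.prod_congr rfl fun q _ => ?_
        rw [key _ _ _, show (⟨g ^ Function.minimalPeriod (g • ·) q.out,
            H.pow_mem hg _⟩ : H) = (⟨g, hg⟩ : H) ^ Function.minimalPeriod (g • ·) q.out from
          Subtype.ext (by simp), map_pow]
    _ = ϕ ⟨g, hg⟩ ^ ∑ q : Quotient (orbitRel (Subgroup.zpowers g) (G ⧸ H)),
          Function.minimalPeriod (g • ·) q.out := Finset.prod_pow_eq_pow_sum _ _ _
    _ = ϕ ⟨g, hg⟩ ^ H.index := by rw [← hsum]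

end Chunk4
section Chunk5

variable {p : ℕ} [Fact p.Prime]

set_option maxHeartbeats 1000000 in
private lemma frobenius_aux : ∀ (n : ℕ) (G : Type) [Group G] [Finite G], Nat.card G ≤ n →
    Crit p G → ∃ (N : Subgroup G) (S : Sylow p G), N.Normal ∧ N.IsComplement' S := by
  intro n
  induction n using Nat.strong_induction_on with
  | _ n ih =>
  intro G _ _ hn hc
  obtain ⟨S⟩ : Nonempty (Sylow p G) := inferInstance
  by_cases hbot : (S : Subgroup G) = ⊥
  · exact ⟨⊤, S, inferInstance, by rw [hbot]; exact Subgroup.isComplement'_top_bot⟩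
  haveI hSnt : Nontrivial ↥(S : Subgroup G) := (Subgroup.nontrivial_iff_ne_bot _).mpr hbot
  have hfus := fusion hc S
  -- transfer evaluation on elements of S
  have hkey : ∀ (g : G) (hg : g ∈ (S : Subgroup G)),
      MonoidHom.transfer (Abelianization.of (G := ↥(S : Subgroup G))) g
        = Abelianization.of ⟨g, hg⟩ ^ (S : Subgroup G).index := by
    intro g hg
    refine transfer_eq_pow_of_fusion _ g hg ?_
    intro k g₀ h
    have hzle : Subgroup.zpowers (g ^ k) ≤ (S : Subgroup G) :=
      Subgroup.zpowers_le.mpr ((S : Subgroup G).pow_mem hg k)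
    have hcj : cj g₀⁻¹ (Subgroup.zpowers (g ^ k)) = Subgroup.zpowers (g₀⁻¹ * g ^ k * g₀) := by
      show Subgroup.map (MulAut.conj g₀⁻¹).toMonoidHom (Subgroup.zpowers (g ^ k)) = _
      rw [MonoidHom.map_zpowers]
      congr 1
      simp [MulAut.conj_apply]
    have hcjle : cj g₀⁻¹ (Subgroup.zpowers (g ^ k)) ≤ (S : Subgroup G) := by
      rw [hcj]; exact Subgroup.zpowers_le.mpr h
    obtain ⟨s, hsS, hsc⟩ := hfus _ hzle g₀⁻¹ hcjle
    have hcomm := Subgroup.mem_centralizer_iff.mp hsc (g ^ k) (Subgroup.mem_zpowers _)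
    have heq : g₀⁻¹ * g ^ k * g₀ = s * g ^ k * s⁻¹ := by
      calc g₀⁻¹ * g ^ k * g₀
          = s * ((s⁻¹ * g₀⁻¹ * g ^ k) * (s⁻¹ * g₀⁻¹)⁻¹) * s⁻¹ := by group
        _ = s * ((g ^ k * (s⁻¹ * g₀⁻¹)) * (s⁻¹ * g₀⁻¹)⁻¹) * s⁻¹ := by rw [← hcomm]
        _ = s * g ^ k * s⁻¹ := by group
    have hsub : (⟨g₀⁻¹ * g ^ k * g₀, h⟩ : ↥(S : Subgroup G))
        = ⟨s, hsS⟩ * ⟨g ^ k, (S : Subgroup G).pow_mem hg k⟩ * ⟨s, hsS⟩⁻¹ := by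
      apply Subtype.ext
      push_cast
      exact heq
    rw [hsub, map_mul, map_mul, map_inv]
    exact mul_inv_eq_iff_eq_mul.mpr (mul_comm _ _)
  -- A := Abelianization S is a nontrivial p-group
  have hAp : IsPGroup p (Abelianization ↥(S : Subgroup G)) :=
    IsPGroup.to_quotient S.2 (commutator ↥(S : Subgroup G))
  obtain ⟨a0, ha0⟩ := hAp.exists_card_eq
  have hSidx : ¬ p ∣ (S : Subgroup G).index := S.not_dvd_index
  have hcop : (Nat.card (Abelianization ↥(S : Subgroup G))).Coprime ((S : Subgroup G).index) := by
    rw [ha0]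
    exact (((Fact.out (p := p.Prime)).coprime_iff_not_dvd).mpr hSidx).pow_left a0
  -- V is surjective
  have hVsurj : Function.Surjective
      (MonoidHom.transfer (Abelianization.of (G := ↥(S : Subgroup G)))) := by
    intro a
    obtain ⟨b, hb⟩ := (powCoprime hcop).surjective a
    obtain ⟨x, hx⟩ := (QuotientGroup.mk_surjective
      (s := commutator ↥(S : Subgroup G))) b
    refine ⟨(x : G), ?_⟩
    rw [hkey (x : G) x.2]
    rw [show (⟨(x : G), x.2⟩ : ↥(S : Subgroup G)) = x from Subtype.ext rfl]
    rw [show (Abelianization.of (G := ↥(S : Subgroup G))) x = b from hx]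
    exact hb
  -- the kernel K
  have hKidx : (MonoidHom.transfer (Abelianization.of (G := ↥(S : Subgroup G)))).ker.index
      = Nat.card (Abelianization ↥(S : Subgroup G)) := by
    rw [Subgroup.index_ker, MonoidHom.range_eq_top.mpr hVsurj]
    exact Subgroup.card_top
  set K := (MonoidHom.transfer (Abelianization.of (G := ↥(S : Subgroup G)))).ker with hKdef
  set Tg := (commutator ↥(S : Subgroup G)).map (S : Subgroup G).subtype with hTgdef
  have hTK : Tg ≤ K := by
    rintro x ⟨y, hy, rfl⟩
    exact Abelianization.commutator_subset_ker
      ((MonoidHom.transfer (Abelianization.of (G := ↥(S : Subgroup G)))).comp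
        (S : Subgroup G).subtype) hy
  have hTS : Tg ≤ (S : Subgroup G) := Subgroup.map_subtype_le _
  -- index bookkeeping
  have hA1 : Nat.card (Abelianization ↥(S : Subgroup G)) ≠ 1 := by
    have hct : commutator ↥(S : Subgroup G) ≠ ⊤ := by
      haveI : Group.IsNilpotent ↥(S : Subgroup G) := S.2.isNilpotent
      exact commutator_ne_top
    intro h1
    refine hct (Subgroup.index_eq_one.mp ?_)
    rw [Subgroup.index_eq_card]
    exact h1
  have hrel1 := Subgroup.relIndex_mul_index hTK
  have hrel2 := Subgroup.relIndex_mul_index hTS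
  have hrel3 : Tg.relIndex (S : Subgroup G) = Nat.card (Abelianization ↥(S : Subgroup G)) := by
    show (Tg.subgroupOf (S : Subgroup G)).index = _
    rw [hTgdef, show ((commutator ↥(S : Subgroup G)).map (S : Subgroup G).subtype).subgroupOf
        (S : Subgroup G) = commutator ↥(S : Subgroup G) from
      Subgroup.comap_map_eq_self_of_injective (Subgroup.subtype_injective _) _]
    rw [Subgroup.index_eq_card]
    rfl
  have hrelK : Tg.relIndex K = (S : Subgroup G).index := by
    have h7 : Tg.relIndex K * Nat.card (Abelianization ↥(S : Subgroup G))
        = (S : Subgroup G).index * Nat.card (Abelianization ↥(S : Subgroup G)) := by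
      calc Tg.relIndex K * Nat.card (Abelianization ↥(S : Subgroup G))
          = Tg.relIndex K * K.index := by rw [hKidx]
        _ = Tg.index := hrel1
        _ = Tg.relIndex (S : Subgroup G) * (S : Subgroup G).index := hrel2.symm
        _ = Nat.card (Abelianization ↥(S : Subgroup G)) * (S : Subgroup G).index := by
            rw [hrel3]
        _ = (S : Subgroup G).index * Nat.card (Abelianization ↥(S : Subgroup G)) :=
            mul_comm _ _
    exact Nat.eq_of_mul_eq_mul_right Nat.card_pos h7
  -- K is a proper subgroup
  have hKlt : Nat.card ↥K < Nat.card G := by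
    have h8 := Subgroup.card_mul_index K
    have hpos : 0 < Nat.card (Abelianization ↥(S : Subgroup G)) := Nat.card_pos
    have h9 : 1 < Nat.card (Abelianization ↥(S : Subgroup G)) := by omega
    calc Nat.card ↥K < Nat.card ↥K * Nat.card (Abelianization ↥(S : Subgroup G)) := by
          have : 0 < Nat.card ↥K := Nat.card_pos
          exact lt_mul_iff_one_lt_right this |>.mpr h9
      _ = Nat.card G := by rw [← hKidx]; exact h8
  -- apply the induction hypothesis to K
  obtain ⟨NK, SK, hNKn, hNKc⟩ := ih (Nat.card ↥K) (lt_of_lt_of_le hKlt hn) ↥K le_rfl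
    (crit_subgroup hc K)
  -- cardinality bookkeeping
  have a1 : Nat.card NK * Nat.card SK.1 = Nat.card ↥K := hNKc.card_mul
  obtain ⟨xk, hxk⟩ := SK.2.exists_card_eq
  have hcardT : Nat.card ↥(Tg.subgroupOf K) = Nat.card ↥Tg :=
    Nat.card_congr (Subgroup.subgroupOfEquivOfLe hTK).toEquiv
  have a2 : Nat.card ↥(Tg.subgroupOf K) * (Tg.subgroupOf K).index = Nat.card ↥K :=
    Subgroup.card_mul_index _
  have hidxT' : (Tg.subgroupOf K).index = (S : Subgroup G).index := hrelK
  have hTp : IsPGroup p ↥Tg := by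
    rw [hTgdef]
    exact (IsPGroup.to_subgroup S.2 _).map _
  obtain ⟨yk, hyk⟩ := hTp.exists_card_eq
  have hSKidx : SK.1.index = Nat.card NK := hNKc.index_eq_card
  have hpNK : ¬ p ∣ Nat.card NK := hSKidx ▸ SK.not_dvd_index
  have heq2 : Nat.card NK * Nat.card ↥SK.1 = Nat.card ↥Tg * (S : Subgroup G).index := by
    rw [a1, ← hidxT', ← hcardT]
    exact a2.symm
  have hNKeq : Nat.card NK = (S : Subgroup G).index := by
    have heq3 : Nat.card NK * p ^ xk = p ^ yk * (S : Subgroup G).index := by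
      rw [← hxk, ← hyk]; exact heq2
    have cpN : Nat.Coprime (Nat.card NK) (p ^ yk) :=
      (Nat.Coprime.pow_right yk (((Fact.out (p := p.Prime)).coprime_iff_not_dvd).mpr hpNK).symm)
    have cpI : Nat.Coprime ((S : Subgroup G).index) (p ^ xk) :=
      (Nat.Coprime.pow_right xk (((Fact.out (p := p.Prime)).coprime_iff_not_dvd).mpr hSidx).symm)
    have d1 : Nat.card NK ∣ (S : Subgroup G).index * p ^ yk :=
      ⟨p ^ xk, by rw [mul_comm ((S : Subgroup G).index), ← heq3]⟩
    have d2 : (S : Subgroup G).index ∣ Nat.card NK * p ^ xk := by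
      rw [heq3]; exact dvd_mul_left _ _
    exact Nat.dvd_antisymm (cpN.dvd_of_dvd_mul_right d1) (cpI.dvd_of_dvd_mul_right d2)
  -- quotient K / NK is a p-group
  have hNKidx2 : NK.index = Nat.card ↥SK.1 := by
    have h10 := Subgroup.card_mul_index NK
    have hNKpos : 0 < Nat.card NK := Nat.card_pos
    exact Nat.eq_of_mul_eq_mul_left hNKpos (by rw [h10, ← a1])
  have hquotp : IsPGroup p (↥K ⧸ NK) := IsPGroup.of_card (n := xk) (by
    rw [← Subgroup.index_eq_card, hNKidx2, hxk])
  -- characterization of the complement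
  have hmemN' : ∀ y : G, y ∈ NK.map K.subtype ↔ y ∈ K ∧ ¬ p ∣ orderOf y := by
    intro y
    constructor
    · rintro ⟨z, hz, rfl⟩
      refine ⟨SetLike.coe_mem z, ?_⟩
      rw [show orderOf (K.subtype z) = orderOf z from
        orderOf_injective K.subtype (Subgroup.subtype_injective _) z]
      intro hdvd
      exact hpNK (hdvd.trans (Subgroup.orderOf_dvd_natCard NK hz))
    · rintro ⟨hyK, hyp⟩
      have hz : (⟨y, hyK⟩ : ↥K) ∈ NK := by
        have hq1 : (QuotientGroup.mk (⟨y, hyK⟩ : ↥K) : ↥K ⧸ NK) = 1 := by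
          obtain ⟨m, hm⟩ := hquotp (QuotientGroup.mk (⟨y, hyK⟩ : ↥K))
          have hdvd1 : orderOf (QuotientGroup.mk (⟨y, hyK⟩ : ↥K) : ↥K ⧸ NK) ∣ p ^ m :=
            orderOf_dvd_of_pow_eq_one hm
          have hdvd2 : orderOf (QuotientGroup.mk (⟨y, hyK⟩ : ↥K) : ↥K ⧸ NK) ∣ orderOf y := by
            have h11 := orderOf_map_dvd (QuotientGroup.mk' NK) (⟨y, hyK⟩ : ↥K)
            rwa [Subgroup.orderOf_mk] at h11
          obtain ⟨i, hi, hiq⟩ := (Nat.dvd_prime_pow (Fact.out (p := p.Prime))).mp hdvd1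
          rcases Nat.eq_zero_or_pos i with h0 | h0
          · rw [h0, pow_zero] at hiq
            exact orderOf_eq_one_iff.mp hiq
          · exact absurd ((hiq ▸ dvd_pow_self p h0.ne').trans hdvd2) hyp
        exact (QuotientGroup.eq_one_iff _).mp hq1
      exact ⟨⟨y, hyK⟩, hz, rfl⟩
  -- the complement is normal in G
  have hN'n : (NK.map K.subtype).Normal := by
    constructor
    intro x hx g
    rw [hmemN'] at hx ⊢
    refine ⟨(MonoidHom.normal_ker _).conj_mem x hx.1 g, ?_⟩
    have h12 : orderOf (g * x * g⁻¹) = orderOf x := by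
      have h13 := orderOf_injective (MulAut.conj g).toMonoidHom (MulAut.conj g).injective x
      simpa [MulAut.conj_apply] using h13
    rw [h12]
    exact hx.2
  refine ⟨NK.map K.subtype, S, hN'n, ?_⟩
  have hcardN' : Nat.card ↥(NK.map K.subtype) = Nat.card NK :=
    (Nat.card_congr (Subgroup.equivMapOfInjective NK K.subtype
      (Subgroup.subtype_injective _)).toEquiv).symm
  apply Subgroup.isComplement'_of_coprime
  · rw [hcardN', hNKeq, mul_comm]
    exact Subgroup.card_mul_index _
  · obtain ⟨sx, hsx⟩ := S.2.exists_card_eq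
    rw [hcardN', hNKeq, hsx]
    exact Nat.Coprime.pow_right sx (((Fact.out (p := p.Prime)).coprime_iff_not_dvd).mpr hSidx).symm

end Chunk5
/-- A finite group `G` is `p`-nilpotent (it has a normal `p`-complement) if and only if for every
Sylow `p`-subgroup `S` of `G`, all subgroups `P, Q ≤ S` and every `g ∈ G` with `gPg⁻¹ = Q`,
conjugation by `g` from `P` to `Q` agrees with conjugation by some element `s ∈ S`. -/
theorem pNilpotent_iff_fusion_controlled {p : ℕ} [Fact p.Prime] {G : Type} [Group G] [Finite G] :
    (∃ (N : Subgroup G) (S : Sylow p G), N.Normal ∧ N.IsComplement' S) ↔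
    (∀ (S : Sylow p G) (P Q : Subgroup G), P ≤ S → Q ≤ S → ∀ g : G,
      Subgroup.map (MulAut.conj g).toMonoidHom P = Q →
        ∃ s ∈ S, ∀ x ∈ P, g * x * g⁻¹ = s * x * s⁻¹) := by
  constructor
  · -- forward: a normal p-complement controls fusion
    rintro ⟨N, S, hNn, hNc⟩ S' P Q hPS' hQS' g hmap
    -- N is also a complement of S'
    have hNS' : N.IsComplement' S'.1 := by
      obtain ⟨g0, hg0⟩ := MulAction.exists_smul_eq G S S'
      have hcard : Nat.card S'.1 = Nat.card S.1 := by
        rw [← hg0]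
        exact (card_cj g0 S.1)
      have hNcard : Nat.card N = S.1.index := hNc.index_eq_card.symm
      have hpN : ¬ p ∣ Nat.card N := by rw [hNcard]; exact S.not_dvd_index
      apply Subgroup.isComplement'_of_coprime
      · rw [hcard]; exact hNc.card_mul
      · obtain ⟨a, ha⟩ := S.2.exists_card_eq
        rw [hcard, ha]
        exact Nat.Coprime.pow_right a (((Fact.out (p := p.Prime)).coprime_iff_not_dvd).mpr hpN).symm
    obtain ⟨⟨n0, s0⟩, hns⟩ := hNS'.existsUnique g |>.exists
    refine ⟨(s0 : G), s0.2, ?_⟩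
    intro x hx
    have hy : (s0 : G) * x * (s0 : G)⁻¹ ∈ S'.1 :=
      mul_mem (mul_mem s0.2 (hPS' hx)) (inv_mem s0.2)
    have hgx : g * x * g⁻¹ ∈ S'.1 := hQS' (hmap ▸ mem_cj_of_mem hx)
    have hrel : g * x * g⁻¹ = (n0 : G) * ((s0 : G) * x * (s0 : G)⁻¹) * (n0 : G)⁻¹ := by
      rw [← hns]; group
    have hcomm : (n0 : G) * ((s0 : G) * x * (s0 : G)⁻¹) * (n0 : G)⁻¹
        * ((s0 : G) * x * (s0 : G)⁻¹)⁻¹ ∈ N ⊓ S'.1 := by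
      refine Subgroup.mem_inf.mpr ⟨?_, ?_⟩
      · have h1 : ((s0 : G) * x * (s0 : G)⁻¹) * (n0 : G)⁻¹ * ((s0 : G) * x * (s0 : G)⁻¹)⁻¹ ∈ N :=
          hNn.conj_mem _ (inv_mem n0.2) _
        have h2 := mul_mem n0.2 h1
        rwa [show (n0 : G) * ((s0:G)*x*(s0:G)⁻¹ * (n0:G)⁻¹ * ((s0:G)*x*(s0:G)⁻¹)⁻¹)
          = (n0 : G) * ((s0:G)*x*(s0:G)⁻¹) * (n0:G)⁻¹ * ((s0:G)*x*(s0:G)⁻¹)⁻¹ by group] at h2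
      · have h3 := mul_mem hgx (inv_mem hy)
        rwa [hrel] at h3
    have hone : (n0 : G) * ((s0 : G) * x * (s0 : G)⁻¹) * (n0 : G)⁻¹
        * ((s0 : G) * x * (s0 : G)⁻¹)⁻¹ = 1 := by
      have h4 := hNS'.disjoint.le_bot hcomm
      simpa using h4
    rw [hrel]
    exact mul_inv_eq_one.mp hone
  · -- reverse: controlled fusion implies a normal p-complement (Frobenius)
    intro hfus
    refine frobenius_aux (p := p) (Nat.card G) G le_rfl ?_
    intro Q hQ g hg
    obtain ⟨S1, hQS1⟩ := hQ.exists_le_sylow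
    have hmap : Subgroup.map (MulAut.conj g).toMonoidHom Q = Q := cj_eq_of_mem_normalizer hg
    obtain ⟨s, hsS1, hs⟩ := hfus S1 Q Q hQS1 hQS1 g hmap
    have hcjs : cj s Q = Q := by
      ext y
      constructor
      · rintro ⟨x, hx, rfl⟩
        have h5 : (MulAut.conj s).toMonoidHom x = g * x * g⁻¹ := by
          simp only [MulEquiv.coe_toMonoidHom, MulAut.conj_apply]
          exact (hs x hx).symm
        rw [h5, ← hmap]
        exact mem_cj_of_mem hx
      · intro hy
        rw [← hmap] at hy
        obtain ⟨x, hx, rfl⟩ := hy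
        refine ⟨x, hx, ?_⟩
        simp only [MulEquiv.coe_toMonoidHom, MulAut.conj_apply]
        exact (hs x hx).symm
    have hsN : s ∈ (Subgroup.normalizer (Q : Set G)) := mem_normalizer_of_cj_eq hcjs
    obtain ⟨k, hk⟩ := S1.2 ⟨s, hsS1⟩
    have hks : s ^ p ^ k = 1 := by
      have h6 := congrArg (fun z : ↥S1.1 => (z : G)) hk
      simpa using h6
    refine ⟨k, ?_⟩
    have hcc : s⁻¹ * g ∈ Subgroup.centralizer (Q : Set G) := by
      rw [Subgroup.mem_centralizer_iff]
      intro y hy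
      have h5 := hs y hy
      calc y * (s⁻¹ * g) = s⁻¹ * (s * y * s⁻¹) * g := by group
        _ = s⁻¹ * (g * y * g⁻¹) * g := by rw [← h5]
        _ = s⁻¹ * g * y := by group
    haveI : ((Subgroup.centralizer (Q : Set G)).subgroupOf (Subgroup.normalizer (Q : Set G))).Normal :=
      centralizer_subgroupOf_normal Q
    have hmk : (QuotientGroup.mk' ((Subgroup.centralizer (Q : Set G)).subgroupOf (Subgroup.normalizer (Q : Set G))))
          (⟨g, hg⟩ : ↥(Subgroup.normalizer (Q : Set G)))
        = (QuotientGroup.mk' _) (⟨s, hsN⟩ : ↥(Subgroup.normalizer (Q : Set G))) := by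
      rw [QuotientGroup.mk'_eq_mk']
      refine ⟨⟨g⁻¹ * s, ?_⟩, ?_, ?_⟩
      · -- g⁻¹ * s ∈ normalizer
        exact mul_mem (inv_mem hg) hsN
      · rw [Subgroup.mem_subgroupOf]
        show g⁻¹ * s ∈ Subgroup.centralizer (Q : Set G)
        rw [show g⁻¹ * s = (s⁻¹ * g)⁻¹ by group]
        exact inv_mem hcc
      · apply Subtype.ext
        push_cast
        group
    have hq2 : (QuotientGroup.mk' ((Subgroup.centralizer (Q : Set G)).subgroupOf (Subgroup.normalizer (Q : Set G))))
        ((⟨g, hg⟩ : ↥(Subgroup.normalizer (Q : Set G))) ^ p ^ k) = 1 := by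
      rw [map_pow, hmk, ← map_pow,
        show (⟨s, hsN⟩ : ↥(Subgroup.normalizer (Q : Set G))) ^ p ^ k = 1 from Subtype.ext (by push_cast; exact hks),
        map_one]
    have hgpk : (⟨g, hg⟩ : ↥(Subgroup.normalizer (Q : Set G))) ^ p ^ k ∈
        (Subgroup.centralizer (Q : Set G)).subgroupOf (Subgroup.normalizer (Q : Set G)) :=
      (QuotientGroup.eq_one_iff _).mp hq2
    have h14 := Subgroup.mem_subgroupOf.mp hgpk
    simpa using h14
end

section
/- For any finite group G and prime p, the focal subgroup foc_p(G) = ⟨ x⁻¹ y : x, y ∈ S, y is G-conjugate to x ⟩ of a Sylow p-subgroup S satisfies foc_p(G) = S ∩ [G,G]. -/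
open MulAction Subgroup Function
open scoped commutatorElement

theorem my_transfer_eq_pow {G : Type*} [Group G] {H : Subgroup G} {A : Type*} [CommGroup A]
    (ϕ : H →* A) [H.FiniteIndex] (g : G) (hg : g ∈ H)
    (key : ∀ (k : ℕ) (g₀ : G) (hk : g₀⁻¹ * g ^ k * g₀ ∈ H),
      ϕ ⟨g₀⁻¹ * g ^ k * g₀, hk⟩ = ϕ ⟨g ^ k, H.pow_mem hg k⟩) :
    MonoidHom.transfer ϕ g = ϕ ⟨g, hg⟩ ^ H.index := by
  classical
  letI := H.fintypeQuotientOfFiniteIndex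
  rw [MonoidHom.transfer_eq_prod_quotient_orbitRel_zpowers_quot]
  have h1 : ∀ q : Quotient (orbitRel (zpowers g) (G ⧸ H)),
      ϕ ⟨q.out.out⁻¹ * g ^ Function.minimalPeriod (g • ·) q.out * q.out.out,
        QuotientGroup.out_conj_pow_minimalPeriod_mem H g q.out⟩
        = ϕ ⟨g, hg⟩ ^ Function.minimalPeriod (g • ·) q.out := by
    intro q
    rw [key]
    have : (⟨g, hg⟩ : H) ^ Function.minimalPeriod (g • ·) q.out
        = ⟨g ^ Function.minimalPeriod (g • ·) q.out, H.pow_mem hg _⟩ := by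
      ext; simp
    rw [← this, map_pow]
  rw [Finset.prod_congr rfl fun q _ => h1 q, Finset.prod_pow_eq_pow_sum]
  congr 1
  simp_rw [minimalPeriod_eq_card]
  rw [index_eq_card, Nat.card_eq_fintype_card,
    Fintype.card_congr (selfEquivSigmaOrbits (zpowers g) (G ⧸ H)), Fintype.card_sigma]
  rfl

/-- Focal subgroup theorem: for a Sylow `p`-subgroup `S` of a finite group `G`, the focal
subgroup `⟨x⁻¹ y : x, y ∈ S, y G-conjugate to x⟩` equals `S ∩ [G,G]`. -/
theorem focal_subgroup_eq {p : ℕ} [Fact p.Prime] {G : Type} [Group G] [Finite G]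
    (S : Sylow p G) :
    Subgroup.closure {z : G | ∃ x ∈ S, ∃ g : G, g * x * g⁻¹ ∈ S ∧ z = x⁻¹ * (g * x * g⁻¹)} =
      (S : Subgroup G) ⊓ commutator G := by
  set T : Set G := {z : G | ∃ x ∈ S, ∃ g : G, g * x * g⁻¹ ∈ S ∧ z = x⁻¹ * (g * x * g⁻¹)}
  set K : Subgroup G := Subgroup.closure T with hK
  -- generators lie in S and in the commutator subgroup
  have hKS : K ≤ (S : Subgroup G) := by
    rw [hK, closure_le]
    rintro z ⟨x, hx, g, hgx, rfl⟩
    exact mul_mem (inv_mem hx) hgx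
  have hKC : K ≤ commutator G := by
    rw [hK, closure_le]
    rintro z ⟨x, hx, g, hgx, rfl⟩
    have : x⁻¹ * (g * x * g⁻¹) = ⁅x⁻¹, g⁆ := by group
    rw [SetLike.mem_coe, this]
    exact commutator_mem_commutator (mem_top _) (mem_top _)
  -- the focal subgroup is closed under conjugation by elements of S
  have hconj : ∀ s ∈ (S : Subgroup G), ∀ f ∈ K, s * f * s⁻¹ ∈ K := by
    intro s hs f hf
    have : K ≤ Subgroup.comap ((MulAut.conj s).toMonoidHom) K := by
      rw [hK, closure_le]
      rintro z ⟨x, hx, g, hgx, rfl⟩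
      show (MulAut.conj s) (x⁻¹ * (g * x * g⁻¹)) ∈ K
      have hx' : s * x * s⁻¹ ∈ (S : Subgroup G) := mul_mem (mul_mem hs hx) (inv_mem hs)
      have hgx' : (s * g * s⁻¹) * (s * x * s⁻¹) * (s * g * s⁻¹)⁻¹ ∈ (S : Subgroup G) := by
        have : (s * g * s⁻¹) * (s * x * s⁻¹) * (s * g * s⁻¹)⁻¹ = s * (g * x * g⁻¹) * s⁻¹ := by
          group
        rw [this]
        exact mul_mem (mul_mem hs hgx) (inv_mem hs)
      apply Subgroup.subset_closure
      refine ⟨s * x * s⁻¹, hx', s * g * s⁻¹, hgx', ?_⟩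
      simp only [MulAut.conj_apply]
      group
    have := this hf
    simpa using this
  -- work inside S
  set F : Subgroup S := K.subgroupOf (S : Subgroup G) with hF
  haveI hFn : F.Normal := by
    constructor
    intro f hf s
    rw [hF, mem_subgroupOf] at hf ⊢
    simpa using hconj s s.2 f hf
  have hcommF : ∀ a b : S, (a : G) * b * a⁻¹ * b⁻¹ ∈ K := by
    intro a b
    apply Subgroup.subset_closure
    refine ⟨(a : G)⁻¹, inv_mem a.2, (b : G), ?_, by push_cast; group⟩
    exact mul_mem (mul_mem b.2 (inv_mem a.2)) (inv_mem b.2)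
  letI : CommGroup (S ⧸ F) :=
    { (inferInstance : Group (S ⧸ F)) with
      mul_comm := by
        intro a b
        induction a using QuotientGroup.induction_on with | H s =>
        induction b using QuotientGroup.induction_on with | H t =>
        rw [← QuotientGroup.mk_mul, ← QuotientGroup.mk_mul, QuotientGroup.eq]
        rw [hF, mem_subgroupOf]
        have : ((s * t)⁻¹ * (t * s) : S) = (t⁻¹ : S) * s⁻¹ * (t⁻¹ : S)⁻¹ * (s⁻¹ : S)⁻¹ := by
          group
        rw [this]
        push_cast
        exact hcommF t⁻¹ s⁻¹ }
  set ϕ : S →* S ⧸ F := QuotientGroup.mk' F with hϕ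
  haveI : (S : Subgroup G).FiniteIndex := inferInstance
  apply le_antisymm
  · exact le_inf hKS hKC
  · intro z hz
    rw [Subgroup.mem_inf] at hz
    obtain ⟨hzS, hzC⟩ := hz
    have key : ∀ (k : ℕ) (g₀ : G) (hk : g₀⁻¹ * z ^ k * g₀ ∈ (S : Subgroup G)),
        ϕ ⟨g₀⁻¹ * z ^ k * g₀, hk⟩ = ϕ ⟨z ^ k, (S : Subgroup G).pow_mem hzS k⟩ := by
      intro k g₀ hk
      symm
      rw [hϕ, QuotientGroup.mk'_apply, QuotientGroup.mk'_apply, QuotientGroup.eq]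
      rw [hF, mem_subgroupOf]
      apply Subgroup.subset_closure
      refine ⟨z ^ k, (S : Subgroup G).pow_mem hzS k, g₀⁻¹, ?_, ?_⟩
      · simp only [inv_inv]; exact hk
      · push_cast
        group
    have h1 : MonoidHom.transfer ϕ z = 1 :=
      Abelianization.commutator_subset_ker (MonoidHom.transfer ϕ) hzC
    have h2 : MonoidHom.transfer ϕ z = ϕ ⟨z, hzS⟩ ^ (S : Subgroup G).index :=
      my_transfer_eq_pow ϕ z hzS key
    have hpow : ϕ ⟨z, hzS⟩ ^ (S : Subgroup G).index = 1 := h2 ▸ h1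
    -- order argument
    obtain ⟨n, hn⟩ := S.2 ⟨z, hzS⟩
    have hppow : ϕ ⟨z, hzS⟩ ^ p ^ n = 1 := by
      rw [← map_pow, hn, map_one]
    have hd1 : orderOf (ϕ ⟨z, hzS⟩) ∣ p ^ n := orderOf_dvd_of_pow_eq_one hppow
    have hd2 : orderOf (ϕ ⟨z, hzS⟩) ∣ (S : Subgroup G).index := orderOf_dvd_of_pow_eq_one hpow
    have hcop : Nat.Coprime (p ^ n) (S : Subgroup G).index :=
      Nat.Coprime.pow_left n ((Nat.Prime.coprime_iff_not_dvd Fact.out).mpr S.not_dvd_index)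
    have : orderOf (ϕ ⟨z, hzS⟩) = 1 :=
      Nat.eq_one_of_dvd_coprimes hcop hd1 hd2
    have hϕz : ϕ ⟨z, hzS⟩ = 1 := orderOf_eq_one_iff.mp this
    have : (⟨z, hzS⟩ : S) ∈ F := (QuotientGroup.eq_one_iff _).mp hϕz
    rw [hF, mem_subgroupOf] at this
    exact this
end
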